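/- Let G be the weighted multigraph with two vertices joined by three parallel edges of positive lengths ℓ_1, ℓ_2, ℓ_3, polarized by q ≡ 0 (the unique irreducible cubic polarized graph of genus 2). Then (1/12)·(ℓ_1 + ℓ_2 + ℓ_3) − φ(G) ≤ (5/12)·σ_3/σ_2, where σ_i denotes the i-th elementary symmetric polynomial in ℓ_1, ℓ_2, ℓ_3. -/
import Mathlib


open scoped Classical
open Matrix Filter Topology

/-- A weighted multigraph with vertex type `V` and edge index type `E`:
each edge is assigned an (ordered representative of an unordered) pair of endpoints. -/
structure WMG (V E : Type) where
  ends : E → V × V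

namespace WMG

variable {V E : Type} [Fintype V] [DecidableEq V] [Fintype E] [DecidableEq E]

/-- `a` and `b` are joined by some edge belonging to `S`. -/
def Step (G : WMG V E) (S : Set E) (a b : V) : Prop :=
  ∃ k ∈ S, G.ends k = (a, b) ∨ G.ends k = (b, a)

/-- Any two vertices can be joined by a walk using only edges from `S`. -/
def ConnectedVia (G : WMG V E) (S : Set E) : Prop :=
  ∀ a b : V, Relation.ReflTransGen (G.Step S) a b

/-- `G` is connected. -/
def Connected (G : WMG V E) : Prop := G.ConnectedVia Set.univ

/-- A set `T` of edges is a spanning tree: it has `#V - 1` edges and connects all vertices. -/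
def IsSpanningTree (G : WMG V E) (T : Finset E) : Prop :=
  T.card + 1 = Fintype.card V ∧ G.ConnectedVia ↑T

/-- `η_G(ℓ) = Σ_{T spanning tree} Π_{k ∉ T} ℓ_k`. -/
noncomputable def eta (G : WMG V E) (ℓ : E → ℝ) : ℝ :=
  ∑ T : Finset E, if G.IsSpanningTree T then ∏ k ∈ Tᶜ, ℓ k else 0

/-- The weighted Laplacian matrix of `G`. -/
noncomputable def lap (G : WMG V E) (ℓ : E → ℝ) : Matrix V V ℝ :=
  Matrix.of fun a b =>
    if a = b then
      ∑ k : E, if ((G.ends k).1 = a ∨ (G.ends k).2 = a) ∧ (G.ends k).1 ≠ (G.ends k).2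
        then (ℓ k)⁻¹ else 0
    else
      - ∑ k : E, if G.ends k = (a, b) ∨ G.ends k = (b, a) then (ℓ k)⁻¹ else 0

/-- The standard basis vector (point mass) at a vertex. -/
def delta (a : V) : V → ℝ := fun x => if x = a then 1 else 0

/-- Effective resistance `r(a,b)`: the entry at `a` of the unique solution `h` of
`Q^{(b)} h = u_a` (the Laplacian with row and column `b` deleted).  Equivalently, writing
`h̃` for the extension of `h` by `h̃ b = 0`, it is the entry at `a` of the unique `v` with
`Q v = δ_a - δ_b` and `v b = 0` (the two systems have the same solutions since all row and
column sums of `Q` vanish).  We set `r(a,a) = 0`; this is automatic in the connected case. -/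
noncomputable def res (G : WMG V E) (ℓ : E → ℝ) (a b : V) : ℝ :=
  if h : ∃! v : V → ℝ, G.lap ℓ *ᵥ v = delta a - delta b ∧ v b = 0
  then h.exists.choose a else 0

/-- The valence of a vertex (loop edges counted twice). -/
def valence (G : WMG V E) (a : V) : ℕ :=
  ∑ k : E, ((if (G.ends k).1 = a then 1 else 0) + (if (G.ends k).2 = a then 1 else 0))

/-- The genus of the polarized graph `(G, q)`: `g = #E - #V + 1 + Σ_a q(a)`. -/
def genus (G : WMG V E) (q : V → ℕ) : ℤ :=
  (Fintype.card E : ℤ) - (Fintype.card V : ℤ) + 1 + ∑ a, (q a : ℤ)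

/-- The canonical divisor `K(a) = 2 q(a) + v(a) - 2`, as a real number. -/
noncomputable def Kdiv (G : WMG V E) (q : V → ℕ) (a : V) : ℝ :=
  2 * (q a : ℝ) + (G.valence a : ℝ) - 2

/-- `F(e_k) = 1 - r(e_k)/ℓ_k` where `r(e_k)` is the resistance between the endpoints. -/
noncomputable def Fres (G : WMG V E) (ℓ : E → ℝ) (k : E) : ℝ :=
  1 - G.res ℓ (G.ends k).1 (G.ends k).2 / ℓ k

/-- Zhang's invariant `ε` of the polarized metric graph, via the paper's explicit formula. -/
noncomputable def epsilon (G : WMG V E) (q : V → ℕ) (ℓ : E → ℝ) : ℝ :=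
  (1 / (G.genus q : ℝ)) * ∑ a, ∑ b, (q a : ℝ) * G.Kdiv q b * G.res ℓ a b
  + (((G.genus q : ℝ) - 1) / (3 * (G.genus q : ℝ))) * ∑ k, (G.Fres ℓ k) ^ 2 * ℓ k
  + (1 / (2 * (G.genus q : ℝ))) * ∑ a, G.Kdiv q a *
      ∑ k, G.Fres ℓ k * (G.res ℓ a (G.ends k).1 + G.res ℓ a (G.ends k).2)

/-- `r(K, K) = Σ_{a,b} K(a) K(b) r(a,b)`. -/
noncomputable def rKK (G : WMG V E) (q : V → ℕ) (ℓ : E → ℝ) : ℝ :=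
  ∑ a, ∑ b, G.Kdiv q a * G.Kdiv q b * G.res ℓ a b

/-- Zhang's invariant `φ` of the polarized metric graph, via the paper's explicit formula
`φ = ((5g-2)/(4(g-1))) ε - (3/(8(g-1))) r(K,K) - ℓ(G)/4`. -/
noncomputable def phi (G : WMG V E) (q : V → ℕ) (ℓ : E → ℝ) : ℝ :=
  ((5 * (G.genus q : ℝ) - 2) / (4 * ((G.genus q : ℝ) - 1))) * G.epsilon q ℓ
  - (3 / (8 * ((G.genus q : ℝ) - 1))) * G.rKK q ℓ
  - (∑ k, ℓ k) / 4

/-- The map on vertices identifying `b` with `a` (realized on the subtype omitting `b`). -/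
def fuseV (a b : V) (hab : a ≠ b) (x : V) : {y : V // y ≠ b} :=
  if h : x = b then ⟨a, hab⟩ else ⟨x, h⟩

/-- The fusion `G'` of two distinct vertices `a, b` of `G`: identify `a` and `b`,
keeping all edges and lengths. -/
def fuse (G : WMG V E) (a b : V) (hab : a ≠ b) : WMG {y : V // y ≠ b} E :=
  ⟨fun k => (fuseV a b hab (G.ends k).1, fuseV a b hab (G.ends k).2)⟩

/-- The contraction `G/e` of a non-loop edge: identify the two endpoints of `e`,
delete `e`, and keep all other edges. -/
def contract (G : WMG V E) (k0 : E) (hk : (G.ends k0).1 ≠ (G.ends k0).2) :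
    WMG {y : V // y ≠ (G.ends k0).2} {k : E // k ≠ k0} :=
  ⟨fun k => (fuseV (G.ends k0).1 (G.ends k0).2 hk (G.ends k.1).1,
             fuseV (G.ends k0).1 (G.ends k0).2 hk (G.ends k.1).2)⟩

end WMG

/-- The `i`-th elementary symmetric polynomial of the family `ℓ`. -/
noncomputable def esymE {E : Type} [Fintype E] [DecidableEq E] (i : ℕ) (ℓ : E → ℝ) : ℝ :=
  ∑ s ∈ Finset.powersetCard i (Finset.univ : Finset E), ∏ k ∈ s, ℓ k

/-- The theta graph: two vertices joined by three parallel edges. -/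
def thetaGraph : WMG (Fin 2) (Fin 3) := ⟨fun _ => ((0 : Fin 2), (1 : Fin 2))⟩

lemma res_spec {V E : Type} [Fintype V] [DecidableEq V] [Fintype E] [DecidableEq E]
    (G : WMG V E) (ℓ : E → ℝ) (a b : V) (v : V → ℝ)
    (h1 : G.lap ℓ *ᵥ v = WMG.delta a - WMG.delta b) (h2 : v b = 0)
    (huniq : ∀ w : V → ℝ, G.lap ℓ *ᵥ w = WMG.delta a - WMG.delta b → w b = 0 → w = v) :
    G.res ℓ a b = v a := by
  have h : ∃! w : V → ℝ, G.lap ℓ *ᵥ w = WMG.delta a - WMG.delta b ∧ w b = 0 :=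
    ⟨v, ⟨h1, h2⟩, fun w hw => huniq w hw.1 hw.2⟩
  rw [WMG.res, dif_pos h]
  have hc := h.exists.choose_spec
  rw [huniq _ hc.1 hc.2]

lemma lap_theta (ℓ : Fin 3 → ℝ) :
    thetaGraph.lap ℓ = !![(ℓ 0)⁻¹ + (ℓ 1)⁻¹ + (ℓ 2)⁻¹, -((ℓ 0)⁻¹ + (ℓ 1)⁻¹ + (ℓ 2)⁻¹);
                          -((ℓ 0)⁻¹ + (ℓ 1)⁻¹ + (ℓ 2)⁻¹), (ℓ 0)⁻¹ + (ℓ 1)⁻¹ + (ℓ 2)⁻¹] := by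
  ext a b
  fin_cases a <;> fin_cases b <;>
    simp [WMG.lap, thetaGraph, Fin.sum_univ_three, Prod.ext_iff]

lemma res_theta (ℓ : Fin 3 → ℝ) (hℓ : ∀ k, 0 < ℓ k) (a b : Fin 2) :
    thetaGraph.res ℓ a b =
      if a = b then 0 else ((ℓ 0)⁻¹ + (ℓ 1)⁻¹ + (ℓ 2)⁻¹)⁻¹ := by
  have hs : (0:ℝ) < (ℓ 0)⁻¹ + (ℓ 1)⁻¹ + (ℓ 2)⁻¹ := by
    have := hℓ 0; have := hℓ 1; have := hℓ 2; positivity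
  set s : ℝ := (ℓ 0)⁻¹ + (ℓ 1)⁻¹ + (ℓ 2)⁻¹ with hsdef
  have hs' : s ≠ 0 := ne_of_gt hs
  have hmul : ((ℓ 0)⁻¹ + (ℓ 1)⁻¹ + (ℓ 2)⁻¹) * ((ℓ 0)⁻¹ + (ℓ 1)⁻¹ + (ℓ 2)⁻¹)⁻¹ = 1 :=
    mul_inv_cancel₀ (hsdef ▸ hs')
  fin_cases a <;> fin_cases b
  · -- a = 0, b = 0
    show thetaGraph.res ℓ 0 0 = if (0:Fin 2) = 0 then 0 else s⁻¹
    rw [res_spec thetaGraph ℓ 0 0 (fun _ => 0)]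
    · simp
    · funext x; fin_cases x <;>
        simp [lap_theta, Matrix.mulVec, dotProduct, Fin.sum_univ_two, WMG.delta]
    · rfl
    · intro w hw hw0
      have h0 := congrFun hw 0
      simp [lap_theta, Matrix.mulVec, dotProduct, Fin.sum_univ_two, WMG.delta,
        Pi.sub_apply, hw0] at h0
      have hw1 : w 1 = 0 := by
        rcases h0 with h | h
        · exfalso; rw [hsdef] at hs; linarith
        · exact h
      funext x; fin_cases x <;> simp [hw0, hw1]
  · -- a = 0, b = 1
    show thetaGraph.res ℓ 0 1 = if (0:Fin 2) = 1 then 0 else s⁻¹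
    rw [res_spec thetaGraph ℓ 0 1 (fun x => if x = 0 then s⁻¹ else 0)]
    · simp
    · funext x; fin_cases x <;>
        simp [lap_theta, Matrix.mulVec, dotProduct, Fin.sum_univ_two, WMG.delta] <;>
        first
        | linear_combination hmul
        | linear_combination -hmul
    · simp
    · intro w hw hw0
      have h0 := congrFun hw 0
      simp [lap_theta, Matrix.mulVec, dotProduct, Fin.sum_univ_two, WMG.delta,
        Pi.sub_apply, hw0] at h0
      have hw1 : w 0 = s⁻¹ := by
        rw [hsdef]; exact (inv_eq_of_mul_eq_one_right h0).symm
      funext x; fin_cases x <;> simp [hw0, hw1]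
  · -- a = 1, b = 0
    show thetaGraph.res ℓ 1 0 = if (1:Fin 2) = 0 then 0 else s⁻¹
    rw [res_spec thetaGraph ℓ 1 0 (fun x => if x = 1 then s⁻¹ else 0)]
    · simp
    · funext x; fin_cases x <;>
        simp [lap_theta, Matrix.mulVec, dotProduct, Fin.sum_univ_two, WMG.delta] <;>
        first
        | linear_combination hmul
        | linear_combination -hmul
    · simp
    · intro w hw hw0
      have h0 := congrFun hw 1
      simp [lap_theta, Matrix.mulVec, dotProduct, Fin.sum_univ_two, WMG.delta,
        Pi.sub_apply, hw0] at h0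
      have hw1 : w 1 = s⁻¹ := by
        rw [hsdef]; exact (inv_eq_of_mul_eq_one_right h0).symm
      funext x; fin_cases x <;> simp [hw0, hw1]
  · -- a = 1, b = 1
    show thetaGraph.res ℓ 1 1 = if (1:Fin 2) = 1 then 0 else s⁻¹
    rw [res_spec thetaGraph ℓ 1 1 (fun _ => 0)]
    · simp
    · funext x; fin_cases x <;>
        simp [lap_theta, Matrix.mulVec, dotProduct, Fin.sum_univ_two, WMG.delta]
    · rfl
    · intro w hw hw0
      have h0 := congrFun hw 1
      simp [lap_theta, Matrix.mulVec, dotProduct, Fin.sum_univ_two, WMG.delta,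
        Pi.sub_apply, hw0] at h0
      have hw1 : w 0 = 0 := by
        rcases h0 with h | h
        · exfalso; rw [hsdef] at hs; linarith
        · exact h
      funext x; fin_cases x <;> simp [hw0, hw1]

lemma esym3_eq (ℓ : Fin 3 → ℝ) : esymE 3 ℓ = ℓ 0 * ℓ 1 * ℓ 2 := by
  have h : Finset.powersetCard 3 (Finset.univ : Finset (Fin 3)) =
      {({0,1,2} : Finset (Fin 3))} := by decide
  rw [esymE, h, Finset.sum_singleton]
  rw [show ({0,1,2} : Finset (Fin 3)) = Finset.univ by decide]
  simp [Fin.prod_univ_three]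

lemma esym2_eq (ℓ : Fin 3 → ℝ) :
    esymE 2 ℓ = ℓ 0 * ℓ 1 + ℓ 0 * ℓ 2 + ℓ 1 * ℓ 2 := by
  have h : Finset.powersetCard 2 (Finset.univ : Finset (Fin 3)) =
      {({0,1} : Finset (Fin 3)), {0,2}, {1,2}} := by decide
  rw [esymE, h]
  rw [Finset.sum_insert (by decide), Finset.sum_insert (by decide), Finset.sum_singleton,
    Finset.prod_pair (by decide), Finset.prod_pair (by decide), Finset.prod_pair (by decide)]
  ring

/-- Let `G` be the graph with two vertices joined by three parallel edges of positive
lengths `ℓ_1, ℓ_2, ℓ_3`, polarized by `q ≡ 0` (the unique irreducible cubic polarized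
graph of genus 2).  Then `(1/12)(ℓ_1 + ℓ_2 + ℓ_3) - φ(G) ≤ (5/12) σ_3/σ_2`. -/
theorem stmt_16 (ℓ : Fin 3 → ℝ) (hℓ : ∀ k, 0 < ℓ k) :
    (1 / 12 : ℝ) * (ℓ 0 + ℓ 1 + ℓ 2) - thetaGraph.phi (fun _ => 0) ℓ
      ≤ (5 / 12 : ℝ) * esymE 3 ℓ / esymE 2 ℓ := by
  have h0 := hℓ 0; have h1 := hℓ 1; have h2 := hℓ 2
  have hs : (0:ℝ) < (ℓ 0)⁻¹ + (ℓ 1)⁻¹ + (ℓ 2)⁻¹ := by positivity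
  have hσ2 : (0:ℝ) < ℓ 0 * ℓ 1 + ℓ 0 * ℓ 2 + ℓ 1 * ℓ 2 := by positivity
  apply le_of_eq
  rw [esym3_eq, esym2_eq]
  simp only [WMG.phi, WMG.epsilon, WMG.rKK, WMG.Fres, WMG.Kdiv, WMG.valence, WMG.genus,
    thetaGraph, Fin.sum_univ_two, Fin.sum_univ_three]
  simp only [show ({ ends := fun _ => ((0:Fin 2), (1:Fin 2)) } : WMG (Fin 2) (Fin 3))
      = thetaGraph from rfl, res_theta ℓ hℓ]
  norm_num
  field_simp
  ring
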